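/- Fix x ∈ ℂ. There exists a constant C > 0 such that for every θ ∈ [−π/8, π/8] and every r ≥ 1, setting y := r e^{iθ}, W := 4^{−1/3}·e^{iπ/6} + 2^{−2/3}·e^{−i(π+4θ)/6} and U := 4^{−1/3}·e^{5iπ/6} − 2^{−2/3}·e^{i(π−4θ)/6}, one has | ∫₀^∞ exp( r^{4/3}·f_θ(W + ρ e^{−iθ/3}) − x y^{2/3} (W + ρ e^{−iθ/3})² ) dρ | ≤ C·exp(−1.38·r^{4/3}) and | ∫₀^∞ exp( r^{4/3}·f_θ(U − ρ e^{−iθ/3}) − x y^{2/3} (U − ρ e^{−iθ/3})² ) dρ | ≤ C·exp(−1.38·r^{4/3}). -/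

import Mathlib

open Real MeasureTheory

/-- The phase function `f_θ(t) = e^{4iθ/3}·(i t − t⁴)`. -/
noncomputable def f (θ : ℝ) (t : ℂ) : ℂ :=
  Complex.exp (Complex.I * (4 * (θ : ℂ) / 3)) * (Complex.I * t - t ^ 4)

/-- `W(θ) = t₁ + 2^{−2/3}·e^{−i(π+4θ)/6}`. -/
noncomputable def W (θ : ℝ) : ℂ :=
  (4 : ℂ) ^ (-(1 : ℂ) / 3) * Complex.exp (Complex.I * ((π : ℂ) / 6)) +
    (2 : ℂ) ^ (-(2 : ℂ) / 3) * Complex.exp (-Complex.I * (((π : ℂ) + 4 * (θ : ℂ)) / 6))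

/-- `U(θ) = t₂ − 2^{−2/3}·e^{i(π−4θ)/6}`. -/
noncomputable def U (θ : ℝ) : ℂ :=
  (4 : ℂ) ^ (-(1 : ℂ) / 3) * Complex.exp (Complex.I * (5 * (π : ℂ) / 6)) -
    (2 : ℂ) ^ (-(2 : ℂ) / 3) * Complex.exp (Complex.I * (((π : ℂ) - 4 * (θ : ℂ)) / 6))

/-! ### Auxiliary lemmas -/

noncomputable def cc : ℝ := (2:ℝ) ^ ((1:ℝ)/3)

lemma cc_pos : 0 < cc := Real.rpow_pos_of_pos two_pos _

lemma cc_cube : cc^3 = 2 := by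
  rw [cc, ← Real.rpow_natCast ((2:ℝ)^((1:ℝ)/3)) 3, ← Real.rpow_mul (by norm_num)]
  norm_num

lemma cc_lb : 1.2599 ≤ cc := by
  by_contra h
  push_neg at h
  have h2 : cc^3 ≤ (1.2599:ℝ)^3 := pow_le_pow_left₀ cc_pos.le h.le 3
  rw [cc_cube] at h2; norm_num at h2

lemma cc_ub : cc ≤ 1.26 := by
  by_contra h
  push_neg at h
  have h2 : (1.26:ℝ)^3 ≤ cc^3 := pow_le_pow_left₀ (by norm_num) h.le 3
  rw [cc_cube] at h2; norm_num at h2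

lemma sqrt2_bounds : 1.414213 ≤ Real.sqrt 2 ∧ Real.sqrt 2 ≤ 1.414214 := by
  constructor
  · nlinarith [Real.sq_sqrt (by norm_num : (0:ℝ) ≤ 2), Real.sqrt_nonneg 2]
  · nlinarith [Real.sq_sqrt (by norm_num : (0:ℝ) ≤ 2), Real.sqrt_nonneg 2]

lemma sqrt6_bounds : 2.449489 ≤ Real.sqrt 6 ∧ Real.sqrt 6 ≤ 2.449490 := by
  constructor
  · nlinarith [Real.sq_sqrt (by norm_num : (0:ℝ) ≤ 6), Real.sqrt_nonneg 6]
  · nlinarith [Real.sq_sqrt (by norm_num : (0:ℝ) ≤ 6), Real.sqrt_nonneg 6]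

lemma cos_five_pi_div_twelve : Real.cos (5*π/12) = (Real.sqrt 6 - Real.sqrt 2)/4 := by
  have h : (5*π/12) = π/4 + π/6 := by ring
  rw [h, Real.cos_add, Real.cos_pi_div_four, Real.cos_pi_div_six, Real.sin_pi_div_four,
    Real.sin_pi_div_six]
  rw [show Real.sqrt 6 = Real.sqrt 2 * Real.sqrt 3 by
    rw [← Real.sqrt_mul (by norm_num)]; norm_num]
  ring

lemma cos_sq_5pi24 : Real.cos (5*π/24) ^ 2 = 1/2 + (Real.sqrt 6 - Real.sqrt 2)/8 := by
  have h := Real.cos_sq (5*π/24)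
  rw [show 2*(5*π/24) = 5*π/12 by ring, cos_five_pi_div_twelve] at h
  rw [h]; ring

lemma cos_sq_pi8 : Real.cos (π/8) ^ 2 = 1/2 + Real.sqrt 2/4 := by
  have h := Real.cos_sq (π/8)
  rw [show 2*(π/8) = π/4 by ring, Real.cos_pi_div_four] at h
  rw [h]; ring

lemma cos_bounds (φ : ℝ) (h1 : π/8 ≤ φ) (h2 : φ ≤ 5*π/24) :
    0.7933 ≤ Real.cos φ ∧ Real.cos φ ≤ 0.924 ∧
    0.629409 ≤ Real.cos φ ^ 2 ∧ Real.cos φ ^ 2 ≤ 0.853554 := by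
  have hpi : 3.141592 ≤ π := Real.pi_gt_d6.le
  have hpi' : π ≤ 3.141593 := Real.pi_lt_d6.le
  have hc1 : Real.cos (5*π/24) ≤ Real.cos φ :=
    Real.cos_le_cos_of_nonneg_of_le_pi (by linarith) (by linarith) h2
  have hc2 : Real.cos φ ≤ Real.cos (π/8) :=
    Real.cos_le_cos_of_nonneg_of_le_pi (by linarith) (by linarith) h1
  have hnn : 0 ≤ Real.cos (5*π/24) := by
    apply Real.cos_nonneg_of_mem_Icc
    constructor <;> [linarith; linarith]
  have hs2 := sqrt2_bounds
  have hs6 := sqrt6_bounds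
  have hz1 : (0.629409:ℝ) ≤ Real.cos (5*π/24) ^ 2 := by
    rw [cos_sq_5pi24]; nlinarith [hs2.2, hs6.1]
  have hz2 : Real.cos (π/8) ^2 ≤ 0.853554 := by
    rw [cos_sq_pi8]; nlinarith [hs2.2]
  have hlb : (0.7933:ℝ) ≤ Real.cos (5*π/24) := by nlinarith [hz1, hnn]
  have hub : Real.cos (π/8) ≤ 0.924 := by
    nlinarith [hz2, hnn, hc1, hc2, Real.cos_nonneg_of_mem_Icc (x := π/8) ⟨by linarith, by linarith⟩]
  refine ⟨by linarith, by linarith, ?_, ?_⟩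
  · nlinarith [hz1, hnn, hc1]
  · nlinarith [hz2, hc2, hlb]

lemma key_phase_poly (c w ρ c3 : ℝ) (hc3 : c^3 = 2) (hcl : 1.2599 ≤ c)
    (hw1 : 0.7933 ≤ w) (hw2 : w ≤ 0.924)
    (hz1 : 0.629409 ≤ w^2) (hz2 : w^2 ≤ 0.853554)
    (hρ : 0 ≤ ρ) (hcos3 : c3 = 4*w^3 - 3*w) :
    (c * w + ρ) * c3 - (c * w + ρ)^4 ≤ -1.3804 - 3.4*ρ - ρ^4 := by
  have hq : (1.0959:ℝ) ≤ 3*w^2 - 2*(w^2)^2 := by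
    nlinarith [mul_nonneg (by linarith : (0:ℝ) ≤ w^2 - 0.629409)
      (by linarith : (0:ℝ) ≤ 0.853554 - w^2)]
  have hG : 1.3804 ≤ c * (3*w^2 - 2*(w^2)^2) := by nlinarith [hq, hcl]
  have hc3b : c3 ≤ 0.4 := by rw [hcos3]; nlinarith [hw1, hw2]
  have ha1 : (0.999:ℝ) ≤ c * w := by nlinarith [hcl, hw1]
  have ha0 : (0:ℝ) ≤ c * w := by linarith
  have ha4 : -(c*w)^4 + (c*w) * c3 ≤ -1.3804 := by
    have h4 : c^4 = 2*c := by nlinarith [hc3]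
    have hid : -(c*w)^4 + (c*w) * (4*w^3-3*w) =
        -(c * (3*w^2 - 2*(w^2)^2)) + (c^4 - 2*c)*(-(w^4)) := by ring
    rw [hcos3, hid, h4]; linarith
  have hexp : (c*w)^4 + 4*(c*w)^3*ρ + ρ^4 ≤ (c*w + ρ)^4 := by
    nlinarith [mul_nonneg (sq_nonneg (c*w)) (sq_nonneg ρ),
      mul_nonneg (mul_nonneg ha0 hρ) (mul_nonneg hρ hρ)]
  have hcube : (0.997:ℝ) ≤ (c*w)^3 := by nlinarith [ha1, ha0]
  have hm1 : ρ * c3 ≤ 0.4 * ρ := by nlinarith [mul_le_mul_of_nonneg_left hc3b hρ]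
  have hm2 : 0.997*ρ ≤ (c*w)^3*ρ := mul_le_mul_of_nonneg_right hcube hρ
  nlinarith [hexp, ha4, hm1, hm2]

lemma dd_complex : ((( (2:ℝ)^(-(2:ℝ)/3)) : ℝ) : ℂ) = (2:ℂ) ^ (-(2:ℂ)/3) := by
  rw [Complex.ofReal_cpow (by norm_num : (0:ℝ) ≤ 2)]
  norm_num

lemma four_cpow : (4:ℂ) ^ (-(1:ℂ)/3) = ((( (2:ℝ)^(-(2:ℝ)/3)) : ℝ) : ℂ) := by
  have h4 : ((4:ℝ))^(-(1:ℝ)/3) = (2:ℝ)^(-(2:ℝ)/3) := by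
    rw [show (4:ℝ) = 2^(2:ℝ) by norm_num [Real.rpow_natCast], ← Real.rpow_mul (by norm_num)]
    norm_num
  rw [← h4, Complex.ofReal_cpow (by norm_num : (0:ℝ) ≤ 4)]
  norm_num

lemma cc_eq : cc = 2 * (2:ℝ)^(-(2:ℝ)/3) := by
  have h : (2:ℝ) * (2:ℝ)^(-(2:ℝ)/3) = 2^((1:ℝ) + (-(2:ℝ)/3)) := by
    rw [Real.rpow_add (by norm_num), Real.rpow_one]
  rw [cc, h]; norm_num

lemma cos_exp (z : ℝ) : ((Real.cos z : ℝ) : ℂ) =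
    (Complex.exp (Complex.I * z) + Complex.exp (-Complex.I * z)) / 2 := by
  rw [Complex.ofReal_cos, Complex.cos]
  ring_nf

lemma W_eq (θ : ℝ) : W θ =
    Complex.exp (-Complex.I * ((θ:ℂ)/3)) * ((cc * Real.cos (π/6 + θ/3) : ℝ) : ℂ) := by
  rw [W, four_cpow, ← dd_complex]
  push_cast [cc_eq, cos_exp (π/6 + θ/3)]
  have e1 : Complex.exp (-Complex.I * ((θ:ℂ)/3)) * Complex.exp (Complex.I * ((π:ℂ)/6 + (θ:ℂ)/3))
      = Complex.exp (Complex.I * ((π:ℂ)/6)) := by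
    rw [← Complex.exp_add]; ring_nf
  have e2 : Complex.exp (-Complex.I * ((θ:ℂ)/3)) * Complex.exp (-Complex.I * ((π:ℂ)/6 + (θ:ℂ)/3))
      = Complex.exp (-Complex.I * (((π:ℂ) + 4*(θ:ℂ))/6)) := by
    rw [← Complex.exp_add]; ring_nf
  rw [← e1, ← e2]; ring

lemma U_eq (θ : ℝ) : U θ =
    (-1 : ℂ) * Complex.exp (-Complex.I * ((θ:ℂ)/3)) * ((cc * Real.cos (π/6 - θ/3) : ℝ) : ℂ) := by
  rw [U, four_cpow, ← dd_complex]
  push_cast [cc_eq, cos_exp (π/6 - θ/3)]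
  rw [show Complex.I * (5 * (π:ℂ)/6) =
      (π:ℂ)*Complex.I + (-Complex.I*((π:ℂ)/6 - (θ:ℂ)/3) + -Complex.I*((θ:ℂ)/3)) from by ring]
  rw [Complex.exp_add, Complex.exp_add, Complex.exp_pi_mul_I]
  rw [show Complex.I * (((π:ℂ) - 4*(θ:ℂ))/6) =
      Complex.I*((π:ℂ)/6 - (θ:ℂ)/3) + -Complex.I*((θ:ℂ)/3) from by ring]
  rw [Complex.exp_add]
  ring

lemma f_rot (θ v : ℝ) (ε : ℂ) (hε : ε^4 = 1) :
    f θ (ε * Complex.exp (-Complex.I*((θ:ℂ)/3)) * (v:ℂ)) =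
      ε * Complex.I * Complex.exp (Complex.I*(θ:ℂ)) * (v:ℂ) - (v:ℂ)^4 := by
  rw [f, mul_pow, mul_pow, hε]
  have h4 : Complex.exp (-Complex.I*((θ:ℂ)/3)) ^ (4:ℕ) = Complex.exp (-Complex.I*(4*(θ:ℂ)/3)) := by
    rw [← Complex.exp_nat_mul]; ring_nf
  have h1 : Complex.exp (Complex.I*(4*(θ:ℂ)/3)) * Complex.exp (-Complex.I*((θ:ℂ)/3))
      = Complex.exp (Complex.I*(θ:ℂ)) := by rw [← Complex.exp_add]; ring_nf
  have h2 : Complex.exp (Complex.I*(4*(θ:ℂ)/3)) * Complex.exp (-Complex.I*(4*(θ:ℂ)/3)) = 1 := by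
    rw [← Complex.exp_add]
    rw [show Complex.I*(4*(θ:ℂ)/3) + -Complex.I*(4*(θ:ℂ)/3) = 0 from by ring, Complex.exp_zero]
  rw [h4]
  linear_combination (ε * Complex.I * (v:ℂ)) * h1 - (v:ℂ)^4 * h2

lemma re_exponent (θ R vr : ℝ) (ε : ℝ) :
    (((R:ℝ):ℂ) * ((ε:ℂ) * Complex.I * Complex.exp (Complex.I*(θ:ℂ)) * (vr:ℂ) - (vr:ℂ)^4)).re
      = R * (-(ε * Real.sin θ) * vr - vr^4) := by
  rw [show Complex.I*(θ:ℂ) = (θ:ℂ)*Complex.I from by ring, Complex.exp_mul_I]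
  simp [Complex.mul_re, Complex.mul_im, Complex.cos_ofReal_re, Complex.sin_ofReal_re,
    ← Complex.ofReal_pow]

lemma abs_y_pow (r θ : ℝ) (hr : 0 < r) :
    ‖((r:ℂ) * Complex.exp (Complex.I*(θ:ℂ))) ^ ((2:ℂ)/3)‖ = r ^ ((2:ℝ)/3) := by
  rw [show ((2:ℂ)/3) = (((2/3 : ℝ)):ℂ) from by norm_num, Complex.norm_cpow_real]
  rw [norm_mul, Complex.norm_exp, Complex.norm_real]
  simp [abs_of_pos hr]

lemma rpow_cast (r : ℝ) (hr : 0 ≤ r) : (r:ℂ)^((4:ℂ)/3) = ((r ^ ((4:ℝ)/3) : ℝ) : ℂ) := by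
  rw [Complex.ofReal_cpow hr]; norm_num

lemma assemble (R Q ρ nx v A B : ℝ) (hR1 : 1 ≤ R) (hQ1 : 1 ≤ Q) (hQR : Q^2 = R)
    (hρ : 0 ≤ ρ) (hnx : 0 ≤ nx) (hv0 : 0 ≤ v) (hv17 : v ≤ 1.17 + ρ)
    (hA : A ≤ -1.3804 - 3.4*ρ - ρ^4) (hB : B ≤ nx*(Q*v^2)) :
    R*A + B ≤ 4700*(nx^2+1) - 1.38*R - ρ := by
  have hR0 : (0:ℝ) ≤ R := by linarith
  have h6 := mul_le_mul_of_nonneg_left hA hR0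
  have h7 : R*(-1.3804 - 3.4*ρ - ρ^4) = -1.3804*R - 3.4*(R*ρ) - R*ρ^4 := by ring
  have hRρ : ρ ≤ R*ρ := by nlinarith
  have h2 : v^2 ≤ 2.74 + 2*ρ^2 := by nlinarith [sq_nonneg (ρ - 1.17)]
  have hQ0 : (0:ℝ) ≤ Q := by linarith
  have h3 : nx*(Q*v^2) ≤ nx*(Q*(2.74+2*ρ^2)) := by
    apply mul_le_mul_of_nonneg_left _ hnx
    apply mul_le_mul_of_nonneg_left h2 hQ0
  have h4 : nx*(Q*(2*ρ^2)) ≤ R*ρ^4 + nx^2 := by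
    have hQR4 : Q^2*ρ^4 = R*ρ^4 := by rw [hQR]
    nlinarith [sq_nonneg (Q*ρ^2 - nx), hQR4]
  have h5 : nx*(Q*2.74) ≤ 0.0004*R + 4693*nx^2 := by
    nlinarith [sq_nonneg (0.02*Q - 68.5*nx)]
  have h8 : nx*(Q*(2.74+2*ρ^2)) = nx*(Q*2.74) + nx*(Q*(2*ρ^2)) := by ring
  nlinarith [h6, h7, hRρ, h3, h4, h5, h8, sq_nonneg nx]

lemma master (x : ℂ) (θ r φ ε : ℝ) (t : ℝ → ℂ) (hr : 1 ≤ r)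
    (hφ1 : π/8 ≤ φ) (hφ2 : φ ≤ 5*π/24) (hε : ε = 1 ∨ ε = -1)
    (hrel : ε * Real.sin θ = -Real.cos (3*φ))
    (ht : ∀ ρ : ℝ, t ρ = ((ε : ℝ) : ℂ) * Complex.exp (-Complex.I*((θ:ℂ)/3)) *
      (((cc * Real.cos φ + ρ : ℝ)) : ℂ)) :
    ‖∫ ρ in Set.Ioi (0:ℝ), Complex.exp ((r:ℂ)^((4:ℂ)/3) * f θ (t ρ) -
        x * ((r:ℂ) * Complex.exp (Complex.I*(θ:ℂ))) ^ ((2:ℂ)/3) * (t ρ)^2)‖ ≤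
      Real.exp (4700*(‖x‖^2+1)) * Real.exp (-1.38 * r ^ ((4:ℝ)/3)) := by
  have hr0 : (0:ℝ) < r := lt_of_lt_of_le one_pos hr
  set R := r ^ ((4:ℝ)/3) with hRdef
  set Q := r ^ ((2:ℝ)/3) with hQdef
  set K := 4700*(‖x‖^2+1) with hKdef
  clear_value R Q K
  have hR1 : 1 ≤ R := by
    rw [hRdef, show (1:ℝ) = 1 ^ ((4:ℝ)/3) from (Real.one_rpow _).symm]
    exact Real.rpow_le_rpow (by norm_num) hr (by norm_num)
  have hQ1 : 1 ≤ Q := by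
    rw [hQdef, show (1:ℝ) = 1 ^ ((2:ℝ)/3) from (Real.one_rpow _).symm]
    exact Real.rpow_le_rpow (by norm_num) hr (by norm_num)
  have hQR : Q^2 = R := by
    rw [hQdef, hRdef, ← Real.rpow_natCast (r ^ ((2:ℝ)/3)) 2, ← Real.rpow_mul hr0.le]
    norm_num
  obtain ⟨hw1, hw2, hz1, hz2⟩ := cos_bounds φ hφ1 hφ2
  have hε4 : ((ε:ℝ):ℂ)^4 = 1 := by rcases hε with h | h <;> subst h <;> norm_num
  have hεabs : |ε| = 1 := by rcases hε with h | h <;> subst h <;> norm_num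
  have ha1 : (0.999:ℝ) ≤ cc * Real.cos φ := by nlinarith [cc_lb]
  have ha2 : cc * Real.cos φ ≤ 1.17 := by nlinarith [cc_ub, cc_lb]
  have hx0 : (0:ℝ) ≤ ‖x‖ := norm_nonneg x
  -- pointwise bound
  have key : ∀ ρ : ℝ, 0 ≤ ρ →
      ‖Complex.exp ((r:ℂ)^((4:ℂ)/3) * f θ (t ρ) -
        x * ((r:ℂ) * Complex.exp (Complex.I*(θ:ℂ))) ^ ((2:ℂ)/3) * (t ρ)^2)‖ ≤
      Real.exp (K - 1.38*R) * Real.exp (-ρ) := by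
    intro ρ hρ
    set v : ℝ := cc * Real.cos φ + ρ with hvdef
    clear_value v
    have hv0 : (0:ℝ) ≤ v := by rw [hvdef]; linarith
    rw [Complex.norm_exp, ← Real.exp_add]
    apply Real.exp_le_exp.2
    rw [Complex.sub_re]
    have hre1 : ((r:ℂ)^((4:ℂ)/3) * f θ (t ρ)).re = R * (Real.cos (3*φ) * v - v^4) := by
      rw [rpow_cast r hr0.le, ht ρ, ← hvdef, f_rot θ v _ hε4, ← hRdef, re_exponent θ R v ε]
      rw [show -(ε * Real.sin θ) = Real.cos (3*φ) from by rw [hrel]; ring]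
    rw [hre1]
    have habs_t : ‖t ρ‖ = v := by
      rw [ht ρ, norm_mul, norm_mul, Complex.norm_exp]
      simp only [Complex.norm_real, Real.norm_eq_abs]
      have h0 : (-Complex.I*((θ:ℂ)/3)).re = 0 := by simp
      rw [h0, Real.exp_zero, hεabs, ← hvdef, abs_of_nonneg hv0]; ring
    have hxterm : -(x * ((r:ℂ) * Complex.exp (Complex.I*(θ:ℂ))) ^ ((2:ℂ)/3) * (t ρ)^2).re
        ≤ ‖x‖ * Q * v^2 := by
      have h1 := Complex.abs_re_le_norm
        (x * ((r:ℂ) * Complex.exp (Complex.I*(θ:ℂ))) ^ ((2:ℂ)/3) * (t ρ)^2)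
      have h2 : ‖x * ((r:ℂ) * Complex.exp (Complex.I*(θ:ℂ))) ^ ((2:ℂ)/3) * (t ρ)^2‖
          = ‖x‖ * Q * v^2 := by
        rw [norm_mul, norm_mul, norm_pow, habs_t, abs_y_pow r θ hr0, ← hQdef]
      rw [← h2]
      have h3 := abs_le.1 h1
      linarith [h3.1]
    have hkey : v * Real.cos (3*φ) - v^4 ≤ -1.3804 - 3.4*ρ - ρ^4 := by
      rw [hvdef]
      exact key_phase_poly cc (Real.cos φ) ρ (Real.cos (3*φ)) cc_cube cc_lb hw1 hw2 hz1 hz2 hρ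
        (Real.cos_three_mul φ)
    -- assemble
    have hv17 : v ≤ 1.17 + ρ := by rw [hvdef]; linarith
    have hA : Real.cos (3*φ) * v - v^4 ≤ -1.3804 - 3.4*ρ - ρ^4 := by
      rw [mul_comm (Real.cos (3*φ)) v]; exact hkey
    have hB : -(x * ((r:ℂ) * Complex.exp (Complex.I*(θ:ℂ))) ^ ((2:ℂ)/3) * (t ρ)^2).re
        ≤ ‖x‖*(Q*v^2) := by rw [show ‖x‖*(Q*v^2) = ‖x‖*Q*v^2 from by ring]; exact hxterm
    have hfin := assemble R Q ρ ‖x‖ v _ _ hR1 hQ1 hQR hρ hx0 hv0 hv17 hA hB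
    rw [hKdef]
    linarith only [hfin]
  have hint : IntegrableOn (fun ρ : ℝ => Real.exp (K - 1.38*R) * Real.exp (-ρ)) (Set.Ioi (0:ℝ)) := by
    apply Integrable.const_mul
    exact (by simpa using exp_neg_integrableOn_Ioi 0 one_pos : IntegrableOn (fun x : ℝ => Real.exp (-x)) (Set.Ioi 0))
  calc ‖∫ ρ in Set.Ioi (0:ℝ), Complex.exp ((r:ℂ)^((4:ℂ)/3) * f θ (t ρ) -
        x * ((r:ℂ) * Complex.exp (Complex.I*(θ:ℂ))) ^ ((2:ℂ)/3) * (t ρ)^2)‖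
      ≤ ∫ ρ in Set.Ioi (0:ℝ), ‖Complex.exp ((r:ℂ)^((4:ℂ)/3) * f θ (t ρ) -
        x * ((r:ℂ) * Complex.exp (Complex.I*(θ:ℂ))) ^ ((2:ℂ)/3) * (t ρ)^2)‖ :=
        norm_integral_le_integral_norm _
    _ ≤ ∫ ρ in Set.Ioi (0:ℝ), Real.exp (K - 1.38*R) * Real.exp (-ρ) := by
        apply integral_mono_of_nonneg
        · filter_upwards with ρ using norm_nonneg _
        · exact hint
        · filter_upwards [ae_restrict_mem measurableSet_Ioi] with ρ hρ
          exact key ρ (le_of_lt hρ)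
    _ = Real.exp (K - 1.38*R) * ∫ ρ in Set.Ioi (0:ℝ), Real.exp (-ρ) :=
        integral_const_mul _ _
    _ = Real.exp (K - 1.38*R) := by rw [integral_exp_neg_Ioi_zero, mul_one]
    _ = Real.exp K * Real.exp (-1.38 * R) := by rw [← Real.exp_add]; ring_nf

/-- The contributions of the two infinite tails of the rotated real line are
uniformly exponentially small, of order `exp(−1.38·r^{4/3})`. -/
theorem pearcey_tails_exponentially_small (x : ℂ) :
    ∃ C : ℝ, 0 < C ∧ ∀ θ ∈ Set.Icc (-(π / 8)) (π / 8), ∀ r : ℝ, 1 ≤ r →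
      ‖∫ ρ in Set.Ioi (0 : ℝ),
          Complex.exp ((r : ℂ) ^ ((4 : ℂ) / 3) *
              f θ (W θ + (ρ : ℂ) * Complex.exp (-Complex.I * ((θ : ℂ) / 3)))
            - x * ((r : ℂ) * Complex.exp (Complex.I * (θ : ℂ))) ^ ((2 : ℂ) / 3) *
              (W θ + (ρ : ℂ) * Complex.exp (-Complex.I * ((θ : ℂ) / 3))) ^ 2)‖ ≤
        C * Real.exp (-1.38 * r ^ ((4 : ℝ) / 3)) ∧
      ‖∫ ρ in Set.Ioi (0 : ℝ),
          Complex.exp ((r : ℂ) ^ ((4 : ℂ) / 3) *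
              f θ (U θ - (ρ : ℂ) * Complex.exp (-Complex.I * ((θ : ℂ) / 3)))
            - x * ((r : ℂ) * Complex.exp (Complex.I * (θ : ℂ))) ^ ((2 : ℂ) / 3) *
              (U θ - (ρ : ℂ) * Complex.exp (-Complex.I * ((θ : ℂ) / 3))) ^ 2)‖ ≤
        C * Real.exp (-1.38 * r ^ ((4 : ℝ) / 3)) := by
  refine ⟨Real.exp (4700*(‖x‖^2+1)), Real.exp_pos _, ?_⟩
  rintro θ ⟨hθ1, hθ2⟩ r hr
  have hpi : 3.141592 ≤ π := Real.pi_gt_d6.le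
  have hpi' : π ≤ 3.141593 := Real.pi_lt_d6.le
  constructor
  · apply master x θ r (π/6 + θ/3) 1
      (fun ρ : ℝ => W θ + (ρ : ℂ) * Complex.exp (-Complex.I * ((θ : ℂ) / 3))) hr
    · linarith
    · linarith
    · exact Or.inl rfl
    · rw [show 3*(π/6 + θ/3) = θ + π/2 from by ring, Real.cos_add_pi_div_two]; ring
    · intro ρ
      rw [W_eq θ]
      push_cast
      ring
  · apply master x θ r (π/6 - θ/3) (-1)
      (fun ρ : ℝ => U θ - (ρ : ℂ) * Complex.exp (-Complex.I * ((θ : ℂ) / 3))) hr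
    · linarith
    · linarith
    · exact Or.inr rfl
    · rw [show 3*(π/6 - θ/3) = π/2 - θ from by ring, Real.cos_pi_div_two_sub]; ring
    · intro ρ
      rw [U_eq θ]
      push_cast
      ring
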